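/- For N = 3, the stationary points of the reduced system on the fixed-point set {(x,-x,0)} (and its images under cyclic permutation and sign change), namely the six points with y₀ = 0, |y₁| = √(λ₁/3) and cos 3φ₁ = 0 where λ₁ = 1 - 3γ/2, exist if and only if γ < 2/3, and the potential at each of them equals -λ₁²/2 = -(1 - 3γ/2)²/2. -/

import Mathlib

open scoped BigOperators
open Real

/-- The potential `V_γ` on `ℝ^N` with periodic boundary conditions. -/
noncomputable def V (N : ℕ) [NeZero N] (γ : ℝ) (x : EuclideanSpace ℝ (ZMod N)) : ℝ :=
  ∑ i : ZMod N, ((x i) ^ 4 / 4 - (x i) ^ 2 / 2) + γ / 4 * ∑ i : ZMod N, (x (i + 1) - x i) ^ 2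

/-- The point `(a, -a, 0) ∈ ℝ³`. -/
noncomputable def ptA (a : ℝ) : EuclideanSpace ℝ (ZMod 3) :=
  WithLp.toLp 2 (fun i : ZMod 3 => if i = 0 then a else if i = 1 then -a else 0)

lemma zsum (f : ZMod 3 → ℝ) : ∑ i, f i = f 0 + f 1 + f 2 := Fin.sum_univ_three f

lemma proj_apply' (i : ZMod 3) (x : EuclideanSpace ℝ (ZMod 3)) :
    EuclideanSpace.proj (𝕜 := ℝ) i x = x i := rfl

lemma hasFDerivV (γ : ℝ) (p : EuclideanSpace ℝ (ZMod 3)) :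
    HasFDerivAt (V 3 γ)
      ((∑ i : ZMod 3, ((p i)^3 - p i) • EuclideanSpace.proj (𝕜 := ℝ) i) +
        (γ/4) • ∑ i : ZMod 3, (2*(p (i+1) - p i)) •
          (EuclideanSpace.proj (i+1) - EuclideanSpace.proj i : EuclideanSpace ℝ (ZMod 3) →L[ℝ] ℝ)) p := by
  have hV : V 3 γ = fun x : EuclideanSpace ℝ (ZMod 3) =>
      (∑ i : ZMod 3, ((EuclideanSpace.proj (𝕜 := ℝ) i x)^4/4 - (EuclideanSpace.proj (𝕜 := ℝ) i x)^2/2))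
      + γ/4 * ∑ i : ZMod 3,
        ((EuclideanSpace.proj (i+1) - EuclideanSpace.proj i : EuclideanSpace ℝ (ZMod 3) →L[ℝ] ℝ) x)^2 := by
    funext x
    simp [V]
  rw [hV]
  apply HasFDerivAt.add
  · apply HasFDerivAt.fun_sum
    intro i _
    have hd : HasDerivAt (fun t : ℝ => t^4/4 - t^2/2) ((p i)^3 - p i) (p i) := by
      have h1 : HasDerivAt (fun t : ℝ => t^4/4) ((p i)^3) (p i) := by
        simpa using (hasDerivAt_pow 4 (p i)).div_const 4
      have h2 : HasDerivAt (fun t : ℝ => t^2/2) (p i) (p i) := by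
        simpa using (hasDerivAt_pow 2 (p i)).div_const 2
      exact h1.sub h2
    have := hd.comp_hasFDerivAt p (EuclideanSpace.proj (𝕜 := ℝ) i).hasFDerivAt
    exact this
  · apply HasFDerivAt.const_mul
    apply HasFDerivAt.fun_sum
    intro i _
    set L : EuclideanSpace ℝ (ZMod 3) →L[ℝ] ℝ :=
      (EuclideanSpace.proj (i+1) - EuclideanSpace.proj i) with hL
    have hd : HasDerivAt (fun t : ℝ => t^2) (2*(p (i+1) - p i)) (L p) := by
      have : L p = p (i+1) - p i := by simp [hL]
      rw [this]
      simpa [mul_comm] using hasDerivAt_pow 2 (p (i+1) - p i)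
    exact hd.comp_hasFDerivAt p L.hasFDerivAt

/-- for `N = 3`, the stationary points with symmetry `(x,-x,0)`,
given by `a = √(1 - 3γ/2)` (i.e. `a² = λ₁ = 1 - 3γ/2`, `a > 0`), exist iff `γ < 2/3`,
and at each of them the potential equals `-λ₁²/2 = -(1 - 3γ/2)²/2`. -/
theorem stmt17 (γ : ℝ) (hγ : 0 < γ) :
    (∃ a : ℝ, 0 < a ∧ a ^ 2 = 1 - 3 * γ / 2 ∧
        gradient (V 3 γ) (ptA a) = 0 ∧
        V 3 γ (ptA a) = -(1 - 3 * γ / 2) ^ 2 / 2)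
      ↔ γ < 2 / 3 := by
  constructor
  · rintro ⟨a, ha, ha2, -, -⟩
    nlinarith [sq_nonneg a]
  · intro hγ2
    have hpos : 0 < 1 - 3 * γ / 2 := by linarith
    set a := Real.sqrt (1 - 3 * γ / 2) with hadef
    have ha2 : a ^ 2 = 1 - 3 * γ / 2 := Real.sq_sqrt hpos.le
    have h0 : ptA a 0 = a := rfl
    have h1 : ptA a 1 = -a := rfl
    have h2 : ptA a 2 = 0 := rfl
    have e01 : (0 : ZMod 3) + 1 = 1 := rfl
    have e12 : (1 : ZMod 3) + 1 = 2 := rfl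
    have e20 : (2 : ZMod 3) + 1 = 0 := rfl
    refine ⟨a, Real.sqrt_pos.mpr hpos, ha2, ?_, ?_⟩
    · have hD := hasFDerivV γ (ptA a)
      have hzero : ((∑ i : ZMod 3, ((ptA a i)^3 - ptA a i) • EuclideanSpace.proj (𝕜 := ℝ) i) +
        (γ/4) • ∑ i : ZMod 3, (2*(ptA a (i+1) - ptA a i)) •
          (EuclideanSpace.proj (i+1) - EuclideanSpace.proj i : EuclideanSpace ℝ (ZMod 3) →L[ℝ] ℝ))
          = 0 := by
        ext v
        simp only [ContinuousLinearMap.add_apply, ContinuousLinearMap.smul_apply,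
          ContinuousLinearMap.sum_apply, ContinuousLinearMap.sub_apply,
          proj_apply', ContinuousLinearMap.zero_apply, smul_eq_mul]
        rw [zsum (fun i => ((ptA a i)^3 - ptA a i) * v i),
            zsum (fun i : ZMod 3 => 2*(ptA a (i+1) - ptA a i) * (v (i+1) - v i))]
        rw [e01, e12, e20, h0, h1, h2]
        linear_combination (v 0 - v 1) * a * ha2
      rw [hzero] at hD
      have hg : HasGradientAt (V 3 γ) 0 (ptA a) := by
        rw [hasGradientAt_iff_hasFDerivAt]
        simpa using hD
      exact hg.gradient
    · unfold V
      rw [zsum (fun i : ZMod 3 => (ptA a i)^4/4 - (ptA a i)^2/2),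
          zsum (fun i : ZMod 3 => (ptA a (i+1) - ptA a i)^2)]
      rw [e01, e12, e20, h0, h1, h2]
      nlinarith [ha2]
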